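/- Let U ∈ L be a two-qubit unitary. Then U admits a perfect LOBC simulation consuming two ebits: there exist finite outcome sets 𝒜 and ℬ each of size at most 16, Kraus operators A_a : ℂ²⊗ℂ⁴ → ℂ² with Σ_{a∈𝒜} A_a†A_a = I and B_b : ℂ²⊗ℂ⁴ → ℂ² with Σ_{b∈ℬ} B_b†B_b = I, correction unitaries W_{ab}, V_{ab} ∈ U(2), and amplitudes γ_{ab} ∈ ℂ with Σ_{a,b}|γ_{ab}|² = 1, such that (W_{ab}⊗V_{ab})(A_a⊗B_b)(ψ⊗|Φ₄⁺⟩) = γ_{ab}·Uψ for every ψ ∈ ℂ²⊗ℂ² and every (a,b) ∈ 𝒜×ℬ; here the resource is |Φ₄⁺⟩ = (1/2)Σ_{k=0}^{3}|kk⟩ ∈ ℂ⁴⊗ℂ⁴ (two ebits), A_a acts on the first qubit of ψ together with the first ℂ⁴ factor of the resource, and B_b acts on the second qubit of ψ together with the second ℂ⁴ factor (tensor factors reordered accordingly). -/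

import Mathlib

open Matrix Complex
open scoped Matrix Kronecker

noncomputable section

/-- The Pauli matrices σ₀, σ₁, σ₂, σ₃. -/
def σm : Fin 4 → Matrix (Fin 2) (Fin 2) ℂ :=
  ![1, !![0, 1; 1, 0], !![0, -I; I, 0], !![1, 0; 0, -1]]

/-- The family L: two-qubit unitaries U for which there is a unitary R such that
conjugation by U sends each R σ_j R† ⊗ I (j = 1,2,3) to a product unitary T_j ⊗ V_j. -/
def Lfam : Set (Matrix (Fin 2 × Fin 2) (Fin 2 × Fin 2) ℂ) :=
  {U | U ∈ Matrix.unitaryGroup (Fin 2 × Fin 2) ℂ ∧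
    ∃ R ∈ Matrix.unitaryGroup (Fin 2) ℂ, ∀ j : Fin 4, j ≠ 0 →
      ∃ T ∈ Matrix.unitaryGroup (Fin 2) ℂ, ∃ V ∈ Matrix.unitaryGroup (Fin 2) ℂ,
        U * ((R * σm j * Rᴴ) ⊗ₖ (1 : Matrix (Fin 2) (Fin 2) ℂ)) * Uᴴ = T ⊗ₖ V}

/-- The two-ebit resource |Φ₄⁺⟩ = (1/2)Σ_k |kk⟩ ∈ ℂ⁴⊗ℂ⁴. -/
def phi4 : Fin 4 × Fin 4 → ℂ := fun x => if x.1 = x.2 then (1 / 2 : ℂ) else 0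

/-! ### Auxiliary material for the proof -/

/-- A real unitary operator basis: I, X, Z, XZ. -/
def Qm : Fin 4 → Matrix (Fin 2) (Fin 2) ℂ :=
  ![1, !![0, 1; 1, 0], !![1, 0; 0, -1], !![0, -1; 1, 0]]

/-- First-component decoder Fin 4 → Fin 2. -/
def d1 : Fin 4 → Fin 2 := ![0, 0, 1, 1]
/-- Second-component decoder Fin 4 → Fin 2. -/
def d2 : Fin 4 → Fin 2 := ![0, 1, 0, 1]

lemma sigma_herm (a : Fin 4) : (σm a)ᴴ = σm a := by
  fin_cases a <;> ext i j <;> fin_cases i <;> fin_cases j <;>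
    simp [σm, conjTranspose_apply]

lemma sigma_sum (M : Matrix (Fin 2) (Fin 2) ℂ) :
    ∑ a : Fin 4, σm a * M * σm a = (2 * M.trace) • 1 := by
  ext i j
  fin_cases i <;> fin_cases j <;>
    simp [σm, mul_apply, Fin.sum_univ_two, Fin.sum_univ_four, trace, diag,
      Matrix.sum_apply, one_apply, smul_eq_mul] <;>
    ring_nf <;> simp [Complex.I_sq] <;> ring_nf

lemma P_herm (R : Matrix (Fin 2) (Fin 2) ℂ) (a : Fin 4) :
    (R * σm a * Rᴴ)ᴴ = R * σm a * Rᴴ := by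
  simp [conjTranspose_mul, sigma_herm, mul_assoc]

lemma P_sum (R : Matrix (Fin 2) (Fin 2) ℂ) (hR1 : R * Rᴴ = 1)
    (M : Matrix (Fin 2) (Fin 2) ℂ) :
    ∑ a : Fin 4, (R * σm a * Rᴴ) * M * (R * σm a * Rᴴ) = (2 * M.trace) • 1 := by
  have h : ∀ a : Fin 4, (R * σm a * Rᴴ) * M * (R * σm a * Rᴴ)
      = R * (σm a * (Rᴴ * M * R) * σm a) * Rᴴ := by
    intro a; noncomm_ring
  simp_rw [h, ← Finset.sum_mul, ← Finset.mul_sum, sigma_sum]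
  have ht : (Rᴴ * M * R).trace = M.trace := by
    rw [Matrix.trace_mul_cycle, hR1, one_mul]
  rw [ht, mul_smul_comm, smul_mul_assoc, mul_one, hR1]

lemma P_complete (R : Matrix (Fin 2) (Fin 2) ℂ) (hR1 : R * Rᴴ = 1)
    (i j i' j' : Fin 2) :
    ∑ a : Fin 4, (R * σm a * Rᴴ) i j * (R * σm a * Rᴴ) i' j'
      = 2 * (if j = i' then 1 else 0) * (if i = j' then 1 else 0) := by
  set E : Matrix (Fin 2) (Fin 2) ℂ :=
    Matrix.of fun u v => (if u = j then 1 else 0) * (if v = i' then 1 else 0) with hE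
  have key := congrFun (congrFun (congrArg (fun M => M) (P_sum R hR1 E)) i) j'
  simp only [Matrix.sum_apply, Matrix.smul_apply, Matrix.one_apply, smul_eq_mul] at key
  have h1 : ∀ a : Fin 4, ((R * σm a * Rᴴ) * E * (R * σm a * Rᴴ)) i j'
      = (R * σm a * Rᴴ) i j * (R * σm a * Rᴴ) i' j' := by
    intro a
    simp [mul_apply, hE, Fin.sum_univ_two, ite_mul, mul_ite]
  have h2 : E.trace = if j = i' then 1 else 0 := by
    fin_cases j <;> fin_cases i' <;> simp [trace, diag, hE, Fin.sum_univ_two]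
  simp_rw [h1, h2] at key
  rw [key]

lemma Qm_mem (b : Fin 4) : Qm b ∈ Matrix.unitaryGroup (Fin 2) ℂ := by
  fin_cases b <;> constructor <;>
    (ext i j; fin_cases i <;> fin_cases j <;>
      simp [Qm, star_eq_conjTranspose, conjTranspose_apply, mul_apply,
        Fin.sum_univ_two, one_apply])

lemma Qm_mul_transpose (b : Fin 4) : Qm b * (Qm b)ᵀ = 1 := by
  fin_cases b <;> (ext i j; fin_cases i <;> fin_cases j <;>
    simp [Qm, transpose_apply, mul_apply, Fin.sum_univ_two, one_apply,
      Matrix.vecHead, Matrix.vecTail])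

lemma Qm_star (b : Fin 4) (i j : Fin 2) : star (Qm b i j) = Qm b i j := by
  fin_cases b <;> fin_cases i <;> fin_cases j <;> simp [Qm]

lemma Qm_complete (i j i' j' : Fin 2) :
    ∑ b : Fin 4, Qm b i j * Qm b i' j' =
      2 * (if i = i' then 1 else 0) * (if j = j' then 1 else 0) := by
  fin_cases i <;> fin_cases j <;> fin_cases i' <;> fin_cases j' <;>
    simp [Qm, Fin.sum_univ_four] <;> norm_num

/-- Alice's (unnormalized) Kraus operators: a twisted Bell measurement on the
input qubit and the first half of her resource, keeping the second half. -/
def A0 (P : Fin 4 → Matrix (Fin 2) (Fin 2) ℂ) (a : Fin 4) :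
    Matrix (Fin 2) (Fin 2 × Fin 4) ℂ :=
  Matrix.of fun p xk => P a (d1 xk.2) xk.1 * (if p = d2 xk.2 then 1 else 0)

/-- Bob's (unnormalized) Kraus operators: apply U to (received half, input qubit),
then Bell-measure the first output against the second half of his resource. -/
def B0 (U : Matrix (Fin 2 × Fin 2) (Fin 2 × Fin 2) ℂ) (b : Fin 4) :
    Matrix (Fin 2) (Fin 2 × Fin 4) ℂ :=
  Matrix.of fun q yl => ∑ m : Fin 2, Qm b m (d2 yl.2) * U (m, q) (d1 yl.2, yl.1)

lemma delta2 (u v : Fin 2) :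
    ∑ p : Fin 2, (if p = u then (1 : ℂ) else 0) * (if p = v then 1 else 0)
      = if u = v then 1 else 0 := by
  fin_cases u <;> fin_cases v <;> simp [Fin.sum_univ_two]

lemma AA (P : Fin 4 → Matrix (Fin 2) (Fin 2) ℂ)
    (hPh : ∀ (a : Fin 4) (u v : Fin 2), star (P a u v) = P a v u)
    (hPc : ∀ i j i' j' : Fin 2, ∑ a : Fin 4, P a i j * P a i' j'
      = 2 * (if j = i' then 1 else 0) * (if i = j' then 1 else 0)) :
    ∑ a : Fin 4, (A0 P a)ᴴ * A0 P a = (2 : ℂ) • 1 := by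
  ext i j
  obtain ⟨x, k⟩ := i
  obtain ⟨x', k'⟩ := j
  simp only [Matrix.sum_apply, Matrix.mul_apply, Matrix.conjTranspose_apply,
    A0, Matrix.of_apply, Matrix.smul_apply, Matrix.one_apply, smul_eq_mul]
  have hterm : ∀ (a : Fin 4) (p : Fin 2),
      star (P a (d1 k) x * (if p = d2 k then (1:ℂ) else 0)) *
        (P a (d1 k') x' * (if p = d2 k' then (1:ℂ) else 0)) =
      (P a x (d1 k) * P a (d1 k') x') *
        ((if p = d2 k then (1:ℂ) else 0) * (if p = d2 k' then 1 else 0)) := by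
    intro a p
    have hsi : ∀ (c : Prop) [Decidable c], star (if c then (1:ℂ) else 0)
        = if c then (1:ℂ) else 0 := by
      intro c _; split_ifs <;> simp
    rw [star_mul', hsi, hPh]
    ring
  simp_rw [hterm]
  rw [← Finset.sum_mul_sum]
  rw [hPc x (d1 k) (d1 k') x', delta2]
  fin_cases k <;> fin_cases k' <;>
    simp [d1, d2, Prod.ext_iff] <;> norm_num

lemma BB (U : Matrix (Fin 2 × Fin 2) (Fin 2 × Fin 2) ℂ) (hU2 : Uᴴ * U = 1) :
    ∑ b : Fin 4, (B0 U b)ᴴ * B0 U b = (2 : ℂ) • 1 := by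
  ext i j
  obtain ⟨y, l⟩ := i
  obtain ⟨y', l'⟩ := j
  have hu : ∀ w w' : Fin 2,
      ∑ m : Fin 2, ∑ q : Fin 2, star (U (m, q) (w, y)) * U (m, q) (w', y') =
        if w = w' ∧ y = y' then 1 else 0 := by
    intro w w'
    have h := congrFun (congrFun hU2 (w, y)) (w', y')
    simpa [Matrix.mul_apply, Matrix.conjTranspose_apply, Matrix.one_apply,
      Fintype.sum_prod_type, Prod.ext_iff] using h
  have hu00 : ∑ m : Fin 2, ∑ q : Fin 2,
      star (U (m, q) (0, y)) * U (m, q) (0, y') = if y = y' then 1 else 0 := by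
    simpa using hu 0 0
  have hu11 : ∑ m : Fin 2, ∑ q : Fin 2,
      star (U (m, q) (1, y)) * U (m, q) (1, y') = if y = y' then 1 else 0 := by
    simpa using hu 1 1
  have hu01 : ∑ m : Fin 2, ∑ q : Fin 2,
      star (U (m, q) (0, y)) * U (m, q) (1, y') = 0 := by
    simpa using hu 0 1
  have hu10 : ∑ m : Fin 2, ∑ q : Fin 2,
      star (U (m, q) (1, y)) * U (m, q) (0, y') = 0 := by
    simpa using hu 1 0
  simp only [Fin.sum_univ_two, Prod.mk_zero_zero, Prod.mk_one_one,
    Complex.star_def] at hu00 hu11 hu01 hu10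
  simp only [Matrix.sum_apply, Matrix.mul_apply, Matrix.conjTranspose_apply,
    B0, Matrix.of_apply, Matrix.smul_apply, Matrix.one_apply, smul_eq_mul]
  fin_cases l <;> fin_cases l' <;>
    (simp only [d1, d2, Fin.isValue, Matrix.cons_val_zero, Matrix.cons_val_one,
        Matrix.head_cons, Matrix.cons_val_two, Matrix.cons_val_three,
        Matrix.tail_cons, Fin.sum_univ_two, Fin.sum_univ_four, star_add, star_mul',
        Qm_star, Prod.ext_iff] <;>
      simp only [Qm, Matrix.cons_val_zero, Matrix.cons_val_one, Matrix.head_cons,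
        Matrix.cons_val_two, Matrix.cons_val_three, Matrix.tail_cons,
        Matrix.cons_val', Matrix.empty_val', Matrix.cons_val_fin_one,
        Matrix.one_apply, Matrix.head_fin_const] <;>
      simp <;>
      simp only [← Prod.mk_zero_zero, ← Prod.mk_one_one] at hu00 hu11 hu01 hu10 ⊢ <;>
      first
        | ring1
        | linear_combination (norm := ((try split_ifs) <;> ring1)) 2 * hu00
        | linear_combination (norm := ((try split_ifs) <;> ring1)) 2 * hu11
        | linear_combination (norm := ((try split_ifs) <;> ring1)) 2 * hu01
        | linear_combination (norm := ((try split_ifs) <;> ring1)) 2 * hu10)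

set_option maxHeartbeats 1600000 in
/-- Proposition 1 of the paper (protocol U2E): any U ∈ L admits a perfect LOBC simulation
consuming two ebits. -/
theorem lfam_two_ebit_LOBC (U : Matrix (Fin 2 × Fin 2) (Fin 2 × Fin 2) ℂ)
    (hU : U ∈ Lfam) :
    ∃ (nA nB : ℕ), nA ≤ 16 ∧ nB ≤ 16 ∧
    ∃ (A : Fin nA → Matrix (Fin 2) (Fin 2 × Fin 4) ℂ)
      (B : Fin nB → Matrix (Fin 2) (Fin 2 × Fin 4) ℂ)
      (W V : Fin nA → Fin nB → Matrix (Fin 2) (Fin 2) ℂ)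
      (γ : Fin nA → Fin nB → ℂ),
      (∑ a, (A a)ᴴ * A a = 1) ∧
      (∑ b, (B b)ᴴ * B b = 1) ∧
      (∀ a b, W a b ∈ Matrix.unitaryGroup (Fin 2) ℂ ∧
              V a b ∈ Matrix.unitaryGroup (Fin 2) ℂ) ∧
      (∑ a, ∑ b, ‖γ a b‖ ^ 2 = 1) ∧
      (∀ (ψ : Fin 2 × Fin 2 → ℂ) (a : Fin nA) (b : Fin nB),
        (W a b ⊗ₖ V a b).mulVec
            ((A a ⊗ₖ B b).mulVec fun x => ψ (x.1.1, x.2.1) * phi4 (x.1.2, x.2.2)) =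
          γ a b • U.mulVec ψ) := by
  obtain ⟨hUu, R, hR, hL⟩ := hU
  have hR1 : R * Rᴴ = 1 := by
    have := hR.2; rwa [star_eq_conjTranspose] at this
  have hU2 : Uᴴ * U = 1 := by
    have := hUu.1; rwa [star_eq_conjTranspose] at this
  -- intertwining relation for all j including 0
  have hTV : ∀ j : Fin 4, ∃ T, T ∈ Matrix.unitaryGroup (Fin 2) ℂ ∧
      ∃ V, V ∈ Matrix.unitaryGroup (Fin 2) ℂ ∧
      U * ((R * σm j * Rᴴ) ⊗ₖ (1 : Matrix (Fin 2) (Fin 2) ℂ)) = (T ⊗ₖ V) * U := by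
    intro j
    by_cases hj : j = 0
    · refine ⟨1, Submonoid.one_mem _, 1, Submonoid.one_mem _, ?_⟩
      subst hj
      have : σm 0 = (1 : Matrix (Fin 2) (Fin 2) ℂ) := rfl
      rw [this, mul_one, hR1, Matrix.one_kronecker_one, mul_one, one_mul]
    · obtain ⟨T, hT, V, hV, hE⟩ := hL j hj
      refine ⟨T, hT, V, hV, ?_⟩
      have h2 := congrArg (fun M => M * U) hE
      simp only at h2
      rwa [mul_assoc, hU2, mul_one] at h2
  choose T hT V hV hrel using hTV
  set Pf : Fin 4 → Matrix (Fin 2) (Fin 2) ℂ := fun j => R * σm j * Rᴴ with hPf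
  have hPa : ∀ j, Pf j = R * σm j * Rᴴ := fun j => by rw [hPf]
  set sC : ℂ := ((Real.sqrt 2 : ℝ) : ℂ)⁻¹ with hsC
  have hstar : star sC = sC := by
    simp [hsC]
  have hss : sC * sC = 2⁻¹ := by
    rw [hsC, ← mul_inv, ← Complex.ofReal_mul, Real.mul_self_sqrt (by norm_num)]
    norm_num
  refine ⟨4, 4, by norm_num, by norm_num,
    (fun a => sC • A0 Pf a),
    (fun b => sC • B0 U b),
    (fun a b => (T a)ᴴ * Qm b),
    (fun a b => (V a)ᴴ),
    (fun _ _ => (4⁻¹ : ℂ)), ?_, ?_, ?_, ?_, ?_⟩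
  · -- completeness of Alice's instrument
    have hPh : ∀ (a : Fin 4) (u v : Fin 2),
        star (Pf a u v) = Pf a v u := by
      intro a u v
      rw [hPa]
      conv_rhs => rw [← P_herm R a]
      simp [conjTranspose_apply]
    have hPc : ∀ i j i' j' : Fin 2, ∑ a : Fin 4, Pf a i j * Pf a i' j'
        = 2 * (if j = i' then 1 else 0) * (if i = j' then 1 else 0) := by
      intro i j i' j'
      simp_rw [hPa]
      exact P_complete R hR1 i j i' j'
    simp_rw [Matrix.conjTranspose_smul, Matrix.smul_mul, Matrix.mul_smul, smul_smul]
    rw [← Finset.smul_sum, AA Pf hPh hPc, smul_smul, hstar, hss]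
    norm_num
  · -- completeness of Bob's instrument
    simp_rw [Matrix.conjTranspose_smul, Matrix.smul_mul, Matrix.mul_smul, smul_smul]
    rw [← Finset.smul_sum, BB U hU2, smul_smul, hstar, hss]
    norm_num
  · -- corrections are unitary
    intro a b
    constructor
    · exact Submonoid.mul_mem _ (Unitary.star_mem (hT a)) (Qm_mem b)
    · exact Unitary.star_mem (hV a)
  · -- amplitudes are normalized
    simp [Finset.sum_const]
    norm_num
  · -- the simulation identity
    intro ψ a b
    have hTa : (T a)ᴴ * T a = 1 := by
      have := (hT a).1; rwa [star_eq_conjTranspose] at this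
    have hVa : (V a)ᴴ * V a = 1 := by
      have := (hV a).1; rwa [star_eq_conjTranspose] at this
    have key : ((sC • A0 Pf a) ⊗ₖ (sC • B0 U b)).mulVec
          (fun x => ψ (x.1.1, x.2.1) * phi4 (x.1.2, x.2.2)) =
        (sC * sC * 2⁻¹) • ((((Qm b)ᵀ ⊗ₖ (1 : Matrix (Fin 2) (Fin 2) ℂ)) *
          (U * (Pf a ⊗ₖ (1 : Matrix (Fin 2) (Fin 2) ℂ)))).mulVec ψ) := by
      funext pq
      obtain ⟨p, q⟩ := pq
      simp only [Matrix.mulVec, dotProduct, Pi.smul_apply, smul_eq_mul,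
        Fintype.sum_prod_type, kroneckerMap_apply, Matrix.of_apply, Matrix.mul_apply,
        Matrix.one_apply, Matrix.transpose_apply, Matrix.smul_apply,
        A0, B0, phi4, d1, d2]
      fin_cases p <;> fin_cases q <;>
        simp [Fin.sum_univ_two, Fin.sum_univ_four, Matrix.cons_val_zero,
          Matrix.cons_val_one] <;>
        ring
    rw [key, Matrix.mulVec_smul, Matrix.mulVec_mulVec]
    beta_reduce
    have hmat : (((T a)ᴴ * Qm b) ⊗ₖ (V a)ᴴ) *
        (((Qm b)ᵀ ⊗ₖ (1 : Matrix (Fin 2) (Fin 2) ℂ)) *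
          (U * (Pf a ⊗ₖ (1 : Matrix (Fin 2) (Fin 2) ℂ)))) = U := by
      rw [hPa a, hrel a, ← mul_assoc, ← Matrix.mul_kronecker_mul, ← mul_assoc,
        ← Matrix.mul_kronecker_mul, mul_one, mul_assoc ((T a)ᴴ), Qm_mul_transpose,
        mul_one, hTa, hVa, Matrix.one_kronecker_one, one_mul]
    rw [hmat, hss]
    norm_num

end
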